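/- Let 0 < ε ≤ 1, let c ∈ L^∞((0,1)) with c(x) ≥ c_0 > 0 a.e., and let u ∈ H²((0,1)) ∩ C¹([0,1]) solve −ε u''(x) + c(x) u(x) = 0 on (0,1) with boundary values u(0) = p_0 and u(1) = q_0. Then there exists a constant C, depending only on c_0 and ‖c‖_{L^∞} but independent of ε, p_0 and q_0, such that ε ∫_0^1 |u'(x)|² dx + ∫_0^1 |u(x)|² dx ≤ C (p_0² + q_0²). -/

import Mathlib

set_option maxHeartbeats 1000000

open MeasureTheory Filter Set Topology

/-- Uniform energy estimate for the singularly perturbed two-point boundary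
value problem: if `0 < ε ≤ 1`, `c ≥ c0 > 0` (with `|c| ≤ B`), and
`u ∈ H²((0,1)) ∩ C¹([0,1])` solves `-ε u'' + c u = 0` on `(0,1)` with
`u 0 = p0` and `u 1 = q0`, then
`ε ∫ |u'|² + ∫ |u|² ≤ C (p0² + q0²)` with `C` depending only on `c0` and the
`L^∞` bound of `c`, but independent of `ε`, `p0` and `q0`. -/
theorem energy_estimate_singular_perturbation_bvp
    (c0 B : ℝ) (hc0 : 0 < c0) :
    ∃ C : ℝ, 0 < C ∧
      ∀ (c : ℝ → ℝ),
        -- c ∈ L^∞((0,1)) with c ≥ c0 > 0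
        (∀ y ∈ Set.Icc (0 : ℝ) 1, c0 ≤ c y) →
        (∀ y ∈ Set.Icc (0 : ℝ) 1, |c y| ≤ B) →
        ∀ (ε p0 q0 : ℝ) (u u' u'' : ℝ → ℝ),
          0 < ε → ε ≤ 1 →
          -- u ∈ H²((0,1)) : two derivatives on (0,1), second one in L²
          (∀ y ∈ Set.Ioo (0 : ℝ) 1,
            HasDerivAt u (u' y) y ∧ HasDerivAt u' (u'' y) y) →
          IntegrableOn (fun y => (u'' y) ^ 2) (Set.Ioo (0 : ℝ) 1) →
          -- u ∈ C¹([0,1])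
          ContinuousOn u (Set.Icc (0 : ℝ) 1) →
          ContinuousOn u' (Set.Icc (0 : ℝ) 1) →
          -- -ε u'' + c u = 0 on (0,1)
          (∀ y ∈ Set.Ioo (0 : ℝ) 1, -(ε * u'' y) + c y * u y = 0) →
          -- boundary values
          u 0 = p0 → u 1 = q0 →
          ε * (∫ y in Set.Ioo (0 : ℝ) 1, (u' y) ^ 2) +
            (∫ y in Set.Ioo (0 : ℝ) 1, (u y) ^ 2) ≤
            C * (p0 ^ 2 + q0 ^ 2) := by
  set m : ℝ := min 1 (c0 / 2) with hm
  have hm0 : 0 < m := lt_min one_pos (by linarith)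
  set K : ℝ := 2 + B ^ 2 / (2 * c0) with hK
  have hK0 : 0 < K := by positivity
  refine ⟨K / m, div_pos hK0 hm0, ?_⟩
  intro c hcy hcB ε p0 q0 u u' u'' hε hε1 hderiv hu''sq hucont hu'cont heq hup hq
  set S : Set ℝ := Set.Ioo (0 : ℝ) 1 with hSdef
  have hS : MeasurableSet S := measurableSet_Ioo
  have hSfin : volume S < ⊤ := by
    rw [hSdef, Real.volume_Ioo]; exact ENNReal.ofReal_lt_top
  have hSI : S ⊆ Set.Icc (0 : ℝ) 1 := Set.Ioo_subset_Icc_self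
  set d : ℝ := q0 - p0 with hd
  set l : ℝ → ℝ := fun y => p0 + d * y with hl
  -- basic continuity / integrability
  have hucS : ContinuousOn u S := hucont.mono hSI
  have hu'cS : ContinuousOn u' S := hu'cont.mono hSI
  have hu_meas : AEStronglyMeasurable u (volume.restrict S) :=
    hucS.aestronglyMeasurable hS
  have hu'_meas : AEStronglyMeasurable u' (volume.restrict S) :=
    hu'cS.aestronglyMeasurable hS
  have hl_cont : Continuous l := by continuity
  have hl_meas : AEStronglyMeasurable l (volume.restrict S) :=
    hl_cont.aestronglyMeasurable
  -- u'' is a.e. strongly measurable on S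
  have hu''_meas : AEStronglyMeasurable u'' (volume.restrict S) := by
    have h1 : Measurable (deriv u') := measurable_deriv u'
    refine h1.aestronglyMeasurable.congr ?_
    filter_upwards [ae_restrict_mem hS] with y hy
    exact ((hderiv y hy).2.deriv)
  -- u'' is integrable on S
  have hu''_int : IntegrableOn u'' S := by
    have hg : IntegrableOn (fun y => (1 + (u'' y) ^ 2) / 2) S := by
      exact (((integrableOn_const hSfin.ne).add hu''sq).div_const 2)
    refine hg.integrable.mono hu''_meas ?_
    filter_upwards with y
    have h1 : (0:ℝ) ≤ (1 + (u'' y) ^ 2) / 2 := by positivity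
    rw [Real.norm_eq_abs, Real.norm_eq_abs, abs_of_nonneg h1]
    nlinarith [sq_nonneg (|u'' y| - 1), abs_nonneg (u'' y), sq_abs (u'' y)]
  -- bounds on u and l on Icc
  obtain ⟨Mu, hMu⟩ := (isCompact_Icc (a := (0:ℝ)) (b := 1)).exists_bound_of_continuousOn hucont
  have hMl : ∀ y ∈ Set.Icc (0:ℝ) 1, ‖l y‖ ≤ |p0| + |d| := by
    intro y hy
    rw [Real.norm_eq_abs]
    calc |p0 + d * y| ≤ |p0| + |d * y| := abs_add_le _ _
      _ ≤ |p0| + |d| := by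
          rw [abs_mul]
          have : |y| ≤ 1 := abs_le.2 ⟨by linarith [hy.1], hy.2⟩
          nlinarith [abs_nonneg d, abs_nonneg y]
  -- products with u'' are integrable on S
  have hprod : ∀ (g : ℝ → ℝ), AEStronglyMeasurable g (volume.restrict S) →
      (∀ y ∈ Set.Icc (0:ℝ) 1, ‖g y‖ ≤ max Mu (|p0| + |d|)) →
      IntegrableOn (fun y => g y * u'' y) S := by
    intro g hgm hgb
    refine (hu''_int.norm.const_mul (max Mu (|p0| + |d|))).mono
      (hgm.mul hu''_meas) ?_
    filter_upwards [ae_restrict_mem hS] with y hy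
    have h1 : |g y| ≤ max Mu (|p0| + |d|) := hgb y (hSI hy)
    have h2 : (0:ℝ) ≤ |u'' y| := abs_nonneg _
    have hMx0 : (0:ℝ) ≤ max Mu (|p0| + |d|) := le_trans (abs_nonneg (g y)) h1
    have h3 : ‖max Mu (|p0| + |d|) * ‖u'' y‖‖ = max Mu (|p0| + |d|) * |u'' y| := by
      rw [Real.norm_eq_abs, Real.norm_eq_abs, abs_of_nonneg (by positivity)]
    rw [Real.norm_eq_abs, abs_mul, h3]
    exact mul_le_mul_of_nonneg_right h1 h2
  have hMuMax : ∀ y ∈ Set.Icc (0:ℝ) 1, ‖u y‖ ≤ max Mu (|p0| + |d|) :=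
    fun y hy => le_trans (hMu y hy) (le_max_left _ _)
  have hMlMax : ∀ y ∈ Set.Icc (0:ℝ) 1, ‖l y‖ ≤ max Mu (|p0| + |d|) :=
    fun y hy => le_trans (hMl y hy) (le_max_right _ _)
  have h_uu''_int : IntegrableOn (fun y => u y * u'' y) S := hprod u hu_meas hMuMax
  have h_lu''_int : IntegrableOn (fun y => l y * u'' y) S := hprod l hl_meas hMlMax
  have h_u'sq_int : IntegrableOn (fun y => (u' y) ^ 2) S :=
    ((hu'cont.pow 2).integrableOn_compact isCompact_Icc).mono_set hSI
  have h_usq_int : IntegrableOn (fun y => (u y) ^ 2) S :=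
    ((hucont.pow 2).integrableOn_compact isCompact_Icc).mono_set hSI
  have h_u'_int : IntegrableOn u' S :=
    (hu'cont.integrableOn_compact isCompact_Icc).mono_set hSI
  -- FTC 1 : ∫ u' = d
  have hFTC1 : (∫ y in S, u' y) = d := by
    have h1 : (∫ y in (0:ℝ)..1, u' y) = u 1 - u 0 := by
      refine intervalIntegral.integral_eq_sub_of_hasDeriv_right_of_le (f := u) (f' := u') zero_le_one hucont
        (fun y hy => ((hderiv y hy).1).hasDerivWithinAt) ?_
      rw [intervalIntegrable_iff_integrableOn_Ioc_of_le zero_le_one]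
      exact (integrableOn_Ioc_iff_integrableOn_Ioo (by simp)).2 h_u'_int
    rw [intervalIntegral.integral_of_le zero_le_one, integral_Ioc_eq_integral_Ioo] at h1
    rw [h1, hup, hq]
  -- FTC 2 : integration by parts with w := u - l
  have hFTC2 : (∫ y in S, ((u' y - d) * u' y + (u y - l y) * u'' y)) = 0 := by
    have h1 : (∫ y in (0:ℝ)..1, ((u' y - d) * u' y + (u y - l y) * u'' y))
        = (u 1 - l 1) * u' 1 - (u 0 - l 0) * u' 0 := by
      refine intervalIntegral.integral_eq_sub_of_hasDeriv_right_of_le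
        (f := fun y => (u y - l y) * u' y)
        (f' := fun y => (u' y - d) * u' y + (u y - l y) * u'' y) zero_le_one ?_ ?_ ?_
      · exact ((hucont.sub (hl_cont.continuousOn)).mul hu'cont)
      · intro y hy
        have hu1 := (hderiv y hy).1
        have hu2 := (hderiv y hy).2
        have hld : HasDerivAt l d y := by
          have h := ((hasDerivAt_id y).const_mul d).const_add p0; rw [mul_one] at h; exact h
        exact ((hu1.sub hld).mul hu2).hasDerivWithinAt
      · rw [intervalIntegrable_iff_integrableOn_Ioc_of_le zero_le_one]
        refine (integrableOn_Ioc_iff_integrableOn_Ioo (by simp)).2 ?_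
        refine Integrable.add ?_ ?_
        · have : IntegrableOn (fun y => (u' y - d) * u' y) (Set.Icc (0:ℝ) 1) :=
            (((hu'cont.sub continuousOn_const).mul hu'cont).integrableOn_compact isCompact_Icc)
          exact this.mono_set hSI
        · exact IntegrableOn.congr_fun (h_uu''_int.sub h_lu''_int)
            (fun y _ => (sub_mul (u y) (l y) (u'' y)).symm) hS
    have hw0 : u 0 - l 0 = 0 := by simp [hl, hup]
    have hw1 : u 1 - l 1 = 0 := by simp only [hl]; rw [hq, hd]; ring
    rw [hw0, hw1] at h1
    simp only [zero_mul, sub_zero] at h1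
    rw [intervalIntegral.integral_of_le zero_le_one, integral_Ioc_eq_integral_Ioo] at h1
    exact h1
  -- split the FTC2 integral
  have h_wu'_int : IntegrableOn (fun y => (u' y - d) * u' y) S :=
    (((hu'cont.sub continuousOn_const).mul hu'cont).integrableOn_compact isCompact_Icc).mono_set hSI
  have h_wu''_int : IntegrableOn (fun y => (u y - l y) * u'' y) S :=
    IntegrableOn.congr_fun (h_uu''_int.sub h_lu''_int)
      (fun y _ => (sub_mul (u y) (l y) (u'' y)).symm) hS
  set I1 : ℝ := ∫ y in S, (u' y) ^ 2 with hI1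
  set I0 : ℝ := ∫ y in S, (u y) ^ 2 with hI0
  set Ju : ℝ := ∫ y in S, u y * u'' y with hJu
  set Jl : ℝ := ∫ y in S, l y * u'' y with hJl
  have hsplit : I1 - d ^ 2 + (Ju - Jl) = 0 := by
    have h1 : (∫ y in S, ((u' y - d) * u' y + (u y - l y) * u'' y))
        = (∫ y in S, (u' y - d) * u' y) + (∫ y in S, (u y - l y) * u'' y) :=
      integral_add h_wu'_int h_wu''_int
    have h2 : (∫ y in S, (u' y - d) * u' y) = I1 - d * (∫ y in S, u' y) := by
      rw [hI1, ← integral_const_mul, ← integral_sub h_u'sq_int (h_u'_int.const_mul d)]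
      exact integral_congr_ae (ae_of_all _ (fun y => by ring))
    have h3 : (∫ y in S, (u y - l y) * u'' y) = Ju - Jl := by
      rw [hJu, hJl, ← integral_sub h_uu''_int h_lu''_int]
      exact integral_congr_ae (ae_of_all _ (fun y => by ring))
    rw [h1, h2, h3, hFTC1] at hFTC2
    have : d * d = d ^ 2 := by ring
    rw [this] at hFTC2
    linarith [hFTC2]
  -- the equation:  ε u'' = c u on S
  have heq' : ∀ y ∈ S, ε * u'' y = c y * u y := by
    intro y hy
    have := heq y hy
    linarith
  -- lower bound: c0 * I0 ≤ ε * Ju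
  have hA : c0 * I0 ≤ ε * Ju := by
    have h1 : (∫ y in S, c0 * (u y) ^ 2) ≤ (∫ y in S, ε * (u y * u'' y)) := by
      refine setIntegral_mono_on (h_usq_int.const_mul c0) (h_uu''_int.const_mul ε) hS ?_
      intro y hy
      have h2 : ε * (u y * u'' y) = c y * (u y) ^ 2 := by
        linear_combination (u y) * heq' y hy
      rw [h2]
      have h3 : c0 ≤ c y := hcy y (hSI hy)
      nlinarith [sq_nonneg (u y)]
    rw [integral_const_mul, integral_const_mul] at h1
    exact h1
  -- upper bound: ε * Jl ≤ (c0/2) * I0 + B^2/(2c0) * (p0^2 + q0^2)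
  have hB : ε * Jl ≤ c0 / 2 * I0 + B ^ 2 / (2 * c0) * (p0 ^ 2 + q0 ^ 2) := by
    have h1 : (∫ y in S, ε * (l y * u'' y)) ≤
        (∫ y in S, (c0 / 2 * (u y) ^ 2 + B ^ 2 / (2 * c0) * (p0 ^ 2 + q0 ^ 2))) := by
      refine setIntegral_mono_on (h_lu''_int.const_mul ε)
        ((h_usq_int.const_mul (c0/2)).add (integrableOn_const hSfin.ne)) hS ?_
      intro y hy
      have h2 : ε * (l y * u'' y) = c y * u y * l y := by
        linear_combination (l y) * heq' y hy
      rw [h2]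
      have h3 : c0 ≤ c y := hcy y (hSI hy)
      have h4 : |c y| ≤ B := hcB y (hSI hy)
      have h5 : (c y) ^ 2 ≤ B ^ 2 := by
        obtain ⟨h4a, h4b⟩ := abs_le.1 h4
        nlinarith
      have h6 : (l y) ^ 2 ≤ p0 ^ 2 + q0 ^ 2 := by
        have hy0 : (0:ℝ) ≤ y := le_of_lt hy.1
        have hy1 : y ≤ 1 := le_of_lt hy.2
        have hly : l y = p0 * (1 - y) + q0 * y := by simp only [hl, hd]; ring
        rw [hly]
        have h1y : (0:ℝ) ≤ 1 - y := by linarith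
        have ha : (p0 * (1 - y) + q0 * y) ^ 2
            = (1 - y) * p0 ^ 2 + y * q0 ^ 2 - y * (1 - y) * (p0 - q0) ^ 2 := by ring
        rw [ha]
        linarith [mul_nonneg (mul_nonneg hy0 h1y) (sq_nonneg (p0 - q0)),
          mul_nonneg hy0 (sq_nonneg p0), mul_nonneg h1y (sq_nonneg q0)]
      -- Young: c u l ≤ c0/2 u² + c² l² / (2 c0)
      have h7 : c y * u y * l y ≤ c0 / 2 * (u y) ^ 2 + (c y) ^ 2 * (l y) ^ 2 / (2 * c0) := by
        have hkey : (0:ℝ) ≤ (c0 * u y - c y * l y) ^ 2 := sq_nonneg _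
        have hdd : c0 / 2 * (u y) ^ 2 + (c y) ^ 2 * (l y) ^ 2 / (2 * c0) - c y * u y * l y
            = (c0 * u y - c y * l y) ^ 2 / (2 * c0) := by
          field_simp
          ring
        linarith [div_nonneg hkey (by linarith : (0:ℝ) ≤ 2 * c0), hdd]
      have h8 : (c y) ^ 2 * (l y) ^ 2 / (2 * c0) ≤ B ^ 2 / (2 * c0) * (p0 ^ 2 + q0 ^ 2) := by
        have hpos : (0:ℝ) < 2 * c0 := by linarith
        rw [div_le_iff₀ hpos]
        have h10 := mul_le_mul h5 h6 (sq_nonneg (l y)) (sq_nonneg B)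
        have h11 : B ^ 2 / (2 * c0) * (p0 ^ 2 + q0 ^ 2) * (2 * c0)
            = B ^ 2 * (p0 ^ 2 + q0 ^ 2) := by field_simp
        rw [h11]; exact h10
      linarith
    rw [integral_const_mul] at h1
    have h9 : (∫ y in S, (c0 / 2 * (u y) ^ 2 + B ^ 2 / (2 * c0) * (p0 ^ 2 + q0 ^ 2)))
        = c0 / 2 * I0 + B ^ 2 / (2 * c0) * (p0 ^ 2 + q0 ^ 2) := by
      rw [integral_add (h_usq_int.const_mul (c0/2)) (integrableOn_const hSfin.ne),
        integral_const_mul, setIntegral_const]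
      simp [hI0, hSdef, Real.volume_Ioo]
    rw [h9] at h1
    exact h1
  -- nonnegativity of the integrals
  have hI1nn : 0 ≤ I1 := setIntegral_nonneg hS (fun y _ => sq_nonneg _)
  have hI0nn : 0 ≤ I0 := setIntegral_nonneg hS (fun y _ => sq_nonneg _)
  -- combine: ε I1 + (c0/2) I0 ≤ K (p0² + q0²)
  have hd2 : d ^ 2 ≤ 2 * (p0 ^ 2 + q0 ^ 2) := by
    rw [hd]; nlinarith [sq_nonneg (p0 + q0)]
  have hmain : ε * I1 + c0 / 2 * I0 ≤ K * (p0 ^ 2 + q0 ^ 2) := by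
    have h1 : ε * I1 + ε * Ju = ε * d ^ 2 + ε * Jl := by
      linear_combination ε * hsplit
    have h2 : ε * d ^ 2 ≤ 2 * (p0 ^ 2 + q0 ^ 2) := by
      have hd2nn : (0:ℝ) ≤ d ^ 2 := sq_nonneg d
      have := mul_le_mul_of_nonneg_right hε1 hd2nn
      linarith
    rw [hK]
    linarith
  -- conclude
  have hm1 : m ≤ 1 := min_le_left _ _
  have hm2 : m ≤ c0 / 2 := min_le_right _ _
  clear_value m K I1 I0 Ju Jl
  have hfin : m * (ε * I1 + I0) ≤ K * (p0 ^ 2 + q0 ^ 2) := by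
    have hεI1 : 0 ≤ ε * I1 := mul_nonneg (le_of_lt hε) hI1nn
    have e1 := mul_le_mul_of_nonneg_right hm1 hεI1
    have e2 := mul_le_mul_of_nonneg_right hm2 hI0nn
    have e3 : m * (ε * I1 + I0) = m * (ε * I1) + m * I0 := by ring
    linarith
  have hgoal : ε * I1 + I0 ≤ K / m * (p0 ^ 2 + q0 ^ 2) := by
    rw [div_mul_eq_mul_div, le_div_iff₀ hm0]
    linarith [hfin, mul_comm m (ε * I1 + I0)]
  exact hgoal
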